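/- Let F = X + H be a polynomial map from k^n to k^n where every monomial of each component of H has degree at least 2, and suppose JH is strongly nilpotent with index p. Then F is a polynomial automorphism and the degree of its inverse satisfies deg(F^{-1}) ≤ deg(F)^{p−1}. -/

import Mathlib

/-- The Jacobian matrix of the polynomial map `H : k^n → k^n`, evaluated at a point `x ∈ k^n`. -/
noncomputable def jacEval {k : Type*} [Field k] {n : ℕ}
    (H : Fin n → MvPolynomial (Fin n) k) (x : Fin n → k) : Matrix (Fin n) (Fin n) k :=
  Matrix.of fun i j => MvPolynomial.eval x (MvPolynomial.pderiv j (H i))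

/-- The degree of a polynomial map: the maximum of the total degrees of its components. -/
noncomputable def mapDeg {k : Type*} [Field k] {n : ℕ}
    (F : Fin n → MvPolynomial (Fin n) k) : ℕ :=
  Finset.univ.sup fun i => (F i).totalDegree

namespace StrongNilpotentAux

open MvPolynomial

variable {k : Type*} [Field k] {n : ℕ}

/-- Chain rule: derivative of a one-variable specialization of an mv-polynomial. -/
lemma derivative_mv_aeval (g : Fin n → Polynomial k) (q : MvPolynomial (Fin n) k) :
    Polynomial.derivative (MvPolynomial.aeval g q) =
      ∑ j, MvPolynomial.aeval g (MvPolynomial.pderiv j q) * Polynomial.derivative (g j) := by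
  induction q using MvPolynomial.induction_on with
  | C c => simp
  | add p q hp hq =>
      simp only [map_add, hp, hq, ← Finset.sum_add_distrib, add_mul]
  | mul_X p j hp =>
      simp only [map_mul, aeval_X, Polynomial.derivative_mul, hp, pderiv_mul]
      classical
      simp only [pderiv_X, map_add, map_mul, aeval_X, add_mul, Finset.sum_add_distrib,
        Finset.sum_mul]
      refine congrArg₂ (· + ·) ?_ ?_
      · exact Finset.sum_congr rfl fun j' _ => by ring
      · rw [Finset.sum_congr rfl (g := fun j' =>
            (if j' = j then MvPolynomial.aeval g p * Polynomial.derivative (g j') else 0)) ?_,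
          Finset.sum_ite_eq' Finset.univ j fun j' =>
            MvPolynomial.aeval g p * Polynomial.derivative (g j')]
        · simp
        · intro j' _
          by_cases h : j' = j
          · subst h; simp [Pi.single_eq_same]
          · simp [h, Pi.single_eq_of_ne h]

/-- The span of all images of products of `m` Jacobian matrices of `H`. -/
noncomputable def WS (H : Fin n → MvPolynomial (Fin n) k) (m : ℕ) : Submodule k (Fin n → k) :=
  Submodule.span k { v | ∃ (x : Fin m → Fin n → k) (u : Fin n → k),
    v = ((List.ofFn fun ℓ => jacEval H (x ℓ)).prod).mulVec u }

lemma WS_zero (H : Fin n → MvPolynomial (Fin n) k) : WS H 0 = ⊤ := by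
  rw [eq_top_iff]
  intro v _
  exact Submodule.subset_span ⟨fun ℓ => ℓ.elim0, v, by simp⟩

lemma mulVec_WS (H : Fin n → MvPolynomial (Fin n) k) (m : ℕ) (x : Fin n → k)
    {w : Fin n → k} (hw : w ∈ WS H m) :
    (jacEval H x).mulVec w ∈ WS H (m + 1) := by
  induction hw using Submodule.span_induction with
  | mem v hv =>
      obtain ⟨xs, u, rfl⟩ := hv
      refine Submodule.subset_span ⟨Fin.cons x xs, u, ?_⟩
      rw [Matrix.mulVec_mulVec, List.ofFn_succ, List.prod_cons]
      simp [Fin.cons_succ]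
  | zero => simp
  | add u v _ _ hu hv => rw [Matrix.mulVec_add]; exact Submodule.add_mem _ hu hv
  | smul c u _ hu => rw [Matrix.mulVec_smul]; exact Submodule.smul_mem _ c hu

lemma eval_line (a w : Fin n → k) {g : Fin n → Polynomial k}
    (hgdef : g = fun j => Polynomial.C (a j) + Polynomial.C (w j) * Polynomial.X)
    (t : k) (q : MvPolynomial (Fin n) k) :
    Polynomial.eval t (MvPolynomial.aeval g q) = MvPolynomial.eval (a + t • w) q := by
  subst hgdef
  induction q using MvPolynomial.induction_on with
  | C c => simp
  | add p q hp hq => simp [hp, hq]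
  | mul_X p j hp =>
      simp only [map_mul, aeval_X, Polynomial.eval_mul, Polynomial.eval_add, Polynomial.eval_C,
        Polynomial.eval_X, hp, MvPolynomial.eval_mul, MvPolynomial.eval_X, Pi.add_apply,
        Pi.smul_apply, smul_eq_mul]
      ring

/-- Key lemma: moving in a direction from `WS H m` changes the value of `H` only by an
element of `WS H (m+1)`. -/
lemma keyB [CharZero k] (H : Fin n → MvPolynomial (Fin n) k) (m : ℕ) (a w : Fin n → k)
    (hw : w ∈ WS H m) :
    (fun i => eval (a + w) (H i)) - (fun i => eval a (H i)) ∈ WS H (m + 1) := by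
  by_contra hmem
  obtain ⟨φ, hφx, hφmap⟩ := Submodule.exists_dual_map_eq_bot_of_notMem hmem inferInstance
  have hφ0 : ∀ s ∈ WS H (m + 1), φ s = 0 := fun s hs => by
    have h1 : φ s ∈ Submodule.map φ (WS H (m + 1)) := Submodule.mem_map_of_mem hs
    rwa [hφmap, Submodule.mem_bot] at h1
  set g : Fin n → Polynomial k :=
    fun j => Polynomial.C (a j) + Polynomial.C (w j) * Polynomial.X with hg
  have hdg : ∀ j, Polynomial.derivative (g j) = Polynomial.C (w j) := by
    intro j; simp [hg]
  set f : Polynomial k :=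
    ∑ i, Polynomial.C (φ (fun j' => if i = j' then 1 else 0)) * MvPolynomial.aeval g (H i)
    with hf
  have hderiv : Polynomial.derivative f = 0 := by
    apply Polynomial.funext
    intro t
    have hv : φ ((jacEval H (a + t • w)).mulVec w) = 0 := hφ0 _ (mulVec_WS H m _ hw)
    rw [LinearMap.pi_apply_eq_sum_univ φ] at hv
    simp only [Matrix.mulVec, dotProduct, jacEval, Matrix.of_apply, smul_eq_mul] at hv
    rw [hf]
    simp only [Polynomial.derivative_sum, Polynomial.derivative_C_mul, derivative_mv_aeval,
      Polynomial.eval_finset_sum, Polynomial.eval_mul, Polynomial.eval_C, hdg,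
      eval_line a w hg, Polynomial.eval_zero]
    exact (Finset.sum_congr rfl fun i _ => mul_comm _ _).trans hv
  have hconst : f.eval 1 = f.eval 0 := by
    rw [Polynomial.eq_C_of_derivative_eq_zero hderiv]; simp
  have h1 : f.eval 1 = φ (fun i => eval (a + w) (H i)) := by
    rw [hf, LinearMap.pi_apply_eq_sum_univ φ (fun i => eval (a + w) (H i))]
    simp only [Polynomial.eval_finset_sum, Polynomial.eval_mul, Polynomial.eval_C,
      eval_line a w hg, one_smul, smul_eq_mul]
    exact Finset.sum_congr rfl fun i _ => by rw [mul_comm]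
  have h0 : f.eval 0 = φ (fun i => eval a (H i)) := by
    rw [hf, LinearMap.pi_apply_eq_sum_univ φ (fun i => eval a (H i))]
    simp only [Polynomial.eval_finset_sum, Polynomial.eval_mul, Polynomial.eval_C,
      eval_line a w hg, zero_smul, add_zero, smul_eq_mul]
    exact Finset.sum_congr rfl fun i _ => by rw [mul_comm]
  apply hφx
  rw [map_sub, ← h1, ← h0, hconst, sub_self]

lemma eval_aeval' (x : Fin n → k) (Q : Fin n → MvPolynomial (Fin n) k)
    (q : MvPolynomial (Fin n) k) :
    eval x (MvPolynomial.aeval Q q) = eval (fun j => eval x (Q j)) q := by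
  induction q using MvPolynomial.induction_on with
  | C c => simp
  | add p q hp hq => simp only [map_add, hp, hq]
  | mul_X p j hp => simp only [map_mul, aeval_X, hp, MvPolynomial.eval_X]

lemma totalDegree_aeval_le (Q : Fin n → MvPolynomial (Fin n) k) (q : MvPolynomial (Fin n) k)
    {D : ℕ} (hQ : ∀ j, (Q j).totalDegree ≤ D) :
    (MvPolynomial.aeval Q q).totalDegree ≤ q.totalDegree * D := by
  conv_lhs => rw [q.as_sum]
  rw [map_sum]
  refine (MvPolynomial.totalDegree_finset_sum _ _).trans (Finset.sup_le fun v hv => ?_)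
  rw [aeval_monomial]
  refine (MvPolynomial.totalDegree_mul _ _).trans ?_
  have h1 : (algebraMap k (MvPolynomial (Fin n) k) (coeff v q)).totalDegree = 0 :=
    totalDegree_C _
  rw [h1, zero_add]
  refine le_trans ?_ (Nat.mul_le_mul_right D (le_totalDegree hv))
  rw [Finsupp.sum, Finset.sum_mul]
  refine le_trans (MvPolynomial.totalDegree_finset_prod _ _) (Finset.sum_le_sum fun j _ => ?_)
  exact (MvPolynomial.totalDegree_pow _ _).trans (Nat.mul_le_mul_left _ (hQ j))

/-- The iteration `G_0 = X`, `G_{m+1} = X - H ∘ G_m`. -/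
noncomputable def invIter (H : Fin n → MvPolynomial (Fin n) k) :
    ℕ → Fin n → MvPolynomial (Fin n) k
  | 0 => fun i => MvPolynomial.X i
  | m + 1 => fun i => MvPolynomial.X i - MvPolynomial.aeval (invIter H m) (H i)

end StrongNilpotentAux

open MvPolynomial StrongNilpotentAux

/-- Main theorem: if `F = X + H` where every monomial of `H` has degree at least two and `JH`
is strongly nilpotent with index `p`, then `F` is a polynomial automorphism and
`deg(F⁻¹) ≤ deg(F)^(p-1)`. -/
theorem degree_bound_strongly_nilpotent
    {k : Type*} [Field k] [CharZero k] {n : ℕ} (p : ℕ)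
    (H : Fin n → MvPolynomial (Fin n) k)
    (hH2 : ∀ i (β : Fin n →₀ ℕ), (β.sum fun _ m => m) < 2 → MvPolynomial.coeff β (H i) = 0)
    (hstrong : ∀ X : Fin p → (Fin n → k),
      (List.ofFn fun ℓ : Fin p => jacEval H (X ℓ)).prod = 0) :
    ∃ Finv : Fin n → MvPolynomial (Fin n) k,
      (∀ i, MvPolynomial.aeval Finv (MvPolynomial.X i + H i) = MvPolynomial.X i) ∧
      (∀ i, MvPolynomial.aeval (fun j => MvPolynomial.X j + H j) (Finv i)
        = MvPolynomial.X i) ∧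
      mapDeg Finv ≤ (mapDeg fun i => MvPolynomial.X i + H i) ^ (p - 1) := by
  classical
  by_cases hn : n = 0
  · subst hn
    refine ⟨fun i => MvPolynomial.X i, fun i => i.elim0, fun i => i.elim0, ?_⟩
    simp [mapDeg]
  have hn' : 0 < n := Nat.pos_of_ne_zero hn
  have hp : 0 < p := by
    rcases Nat.eq_zero_or_pos p with hp0 | hp
    · exfalso
      subst hp0
      have h := hstrong (fun ℓ => ℓ.elim0)
      rw [List.ofFn_zero, List.prod_nil] at h
      have h2 := congrFun (congrFun h ⟨0, hn'⟩) ⟨0, hn'⟩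
      simp [Matrix.one_apply] at h2
    · exact hp
  obtain ⟨q, rfl⟩ : ∃ q, p = q + 1 := ⟨p - 1, (Nat.succ_pred_eq_of_pos hp).symm⟩
  set d := mapDeg fun i => MvPolynomial.X i + H i with hd
  set i0 : Fin n := ⟨0, hn'⟩
  -- d ≥ 1
  have hd1 : 1 ≤ d := by
    have hsupp : Finsupp.single i0 1 ∈ (MvPolynomial.X i0 + H i0).support := by
      rw [MvPolynomial.mem_support_iff, MvPolynomial.coeff_add, MvPolynomial.coeff_X,
        hH2 i0 _ (by simp), add_zero]
      simp
    have h1 : 1 ≤ (MvPolynomial.X i0 + H i0).totalDegree := by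
      simpa using MvPolynomial.le_totalDegree hsupp
    exact h1.trans (Finset.le_sup (f := fun i => (MvPolynomial.X i + H i).totalDegree) (Finset.mem_univ i0))
  -- deg H_i ≤ d
  have hdH : ∀ i, (H i).totalDegree ≤ d := by
    intro i
    have heq : H i = (MvPolynomial.X i + H i) + (-(MvPolynomial.X i)) := by ring
    rw [heq]
    refine (MvPolynomial.totalDegree_add _ _).trans (max_le ?_ ?_)
    · exact Finset.le_sup (f := fun i => (MvPolynomial.X i + H i).totalDegree) (Finset.mem_univ i)
    · rw [MvPolynomial.totalDegree_neg, MvPolynomial.totalDegree_X]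
      exact hd1
  -- degree bound for the iteration
  have hdeg : ∀ m i, (invIter H m i).totalDegree ≤ d ^ m := by
    intro m
    induction m with
    | zero => intro i; simp [invIter, MvPolynomial.totalDegree_X]
    | succ m ih =>
        intro i
        show (MvPolynomial.X i - MvPolynomial.aeval (invIter H m) (H i)).totalDegree ≤ _
        rw [sub_eq_add_neg]
        refine (MvPolynomial.totalDegree_add _ _).trans (max_le ?_ ?_)
        · rw [MvPolynomial.totalDegree_X]
          exact Nat.one_le_pow _ _ hd1
        · rw [MvPolynomial.totalDegree_neg]
          refine (totalDegree_aeval_le _ _ fun j => ih j).trans ?_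
          calc (H i).totalDegree * d ^ m ≤ d * d ^ m :=
                Nat.mul_le_mul_right _ (hdH i)
            _ = d ^ (m + 1) := (pow_succ' d m).symm
  -- constant term of H is zero
  have hH0 : ∀ i, eval (0 : Fin n → k) (H i) = 0 := by
    intro i
    rw [MvPolynomial.eval_zero]
    exact hH2 i 0 (by simp)
  -- the successive differences lie in the flag
  have hdelta : ∀ m (x : Fin n → k),
      ((fun i => eval x (invIter H (m + 1) i)) - fun i => eval x (invIter H m i))
        ∈ WS H (m + 1) := by
    intro m
    induction m with
    | zero =>
        intro x
        have key := keyB H 0 0 x (by rw [WS_zero]; trivial)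
        simp only [zero_add] at key
        have heq : ((fun i => eval x (invIter H 1 i)) - fun i => eval x (invIter H 0 i))
            = -((fun i => eval x (H i)) - fun i => eval (0 : Fin n → k) (H i)) := by
          funext i
          simp only [invIter, map_sub, MvPolynomial.eval_X, Pi.sub_apply, Pi.neg_apply,
            aeval_X_left_apply, hH0 i]
          ring
        rw [heq]
        exact Submodule.neg_mem _ key
    | succ m ih =>
        intro x
        have hb := ih x
        have key := keyB H (m + 1) (fun i => eval x (invIter H m i))
          ((fun i => eval x (invIter H (m + 1) i)) - fun i => eval x (invIter H m i)) hb
        rw [show ((fun i => eval x (invIter H m i)) +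
            ((fun i => eval x (invIter H (m + 1) i)) - fun i => eval x (invIter H m i)))
            = fun i => eval x (invIter H (m + 1) i) from by abel] at key
        have heq : ((fun i => eval x (invIter H (m + 2) i)) - fun i => eval x (invIter H (m + 1) i))
            = -(((fun i => eval (fun j => eval x (invIter H (m + 1) j)) (H i))
                - fun i => eval (fun j => eval x (invIter H m j)) (H i))) := by
          funext i
          show eval x (invIter H (m + 2) i) - eval x (invIter H (m + 1) i) = _
          have e2 : eval x (invIter H (m + 2) i)
              = x i - eval (fun j => eval x (invIter H (m + 1) j)) (H i) := by
            show eval x (MvPolynomial.X i - MvPolynomial.aeval (invIter H (m + 1)) (H i)) = _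
            rw [map_sub, MvPolynomial.eval_X, eval_aeval']
          have e1 : eval x (invIter H (m + 1) i)
              = x i - eval (fun j => eval x (invIter H m j)) (H i) := by
            show eval x (MvPolynomial.X i - MvPolynomial.aeval (invIter H m) (H i)) = _
            rw [map_sub, MvPolynomial.eval_X, eval_aeval']
          rw [e1, e2]
          simp only [Pi.neg_apply, Pi.sub_apply]
          ring
        rw [heq]
        exact Submodule.neg_mem _ key
  -- WS H p = ⊥
  have hWp : WS H (q + 1) = ⊥ := by
    rw [eq_bot_iff, WS, Submodule.span_le]
    rintro v ⟨xs, u, rfl⟩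
    rw [hstrong xs, Matrix.zero_mulVec]
    simp
  -- the iteration stabilizes
  have hfixed : ∀ i, invIter H (q + 1) i = invIter H q i := by
    intro i
    apply MvPolynomial.funext
    intro x
    have h := hdelta q x
    rw [hWp, Submodule.mem_bot] at h
    have h2 := congrFun h i
    simp only [Pi.sub_apply, Pi.zero_apply, sub_eq_zero] at h2
    exact h2
  set Finv := invIter H q with hFinv
  have hfe : ∀ i, Finv i = MvPolynomial.X i - MvPolynomial.aeval Finv (H i) :=
    fun i => (hfixed i).symm
  refine ⟨Finv, ?_, ?_, ?_⟩
  · intro i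
    rw [map_add, aeval_X, hfe i]
    ring
  · intro i
    apply MvPolynomial.funext
    intro x
    set Fx : Fin n → k := fun j => x j + eval x (H j) with hFx
    set e : Fin n → k := fun j => eval Fx (Finv j) with he
    have hev : ∀ j, e j = Fx j - eval e (H j) := by
      intro j
      rw [he]
      show eval Fx (Finv j) = _
      conv_lhs => rw [hfe j]
      rw [map_sub, MvPolynomial.eval_X, eval_aeval']
    have hclaim : ∀ m, (e - x) ∈ WS H m := by
      intro m
      induction m with
      | zero => rw [WS_zero]; trivial
      | succ m ih =>
          have key := keyB H m x (e - x) ih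
          rw [show x + (e - x) = e from by abel] at key
          have heq : e - x = -(((fun i => eval e (H i)) - fun i => eval x (H i))) := by
            funext j
            simp only [Pi.sub_apply, Pi.neg_apply]
            rw [hev j, hFx]
            ring
          rw [heq]
          exact Submodule.neg_mem _ key
    have hex : e = x := by
      have h := hclaim (q + 1)
      rw [hWp, Submodule.mem_bot, sub_eq_zero] at h
      exact h
    have h5 : eval x (MvPolynomial.aeval (fun j => MvPolynomial.X j + H j) (Finv i)) = e i := by
      rw [eval_aeval']
      have hfx2 : (fun j => eval x (MvPolynomial.X j + H j)) = Fx :=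
        funext fun j => by rw [map_add, MvPolynomial.eval_X]
      rw [hfx2]
    rw [h5, hex, MvPolynomial.eval_X]
  · simp only [Nat.add_sub_cancel]
    exact Finset.sup_le fun i _ => hdeg q i
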